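/- arXiv:2602.15353 — 2 statements merged into one kernel-verified Lean document; each statement's English description precedes it below -/
import Mathlib

section
/- Let n ≥ 2, u : Fin n → ℝ, τ > 0, and let i* be an index with u i < u i* for all i ≠ i*, with utility gap Δ = min_{i ≠ i*} (u i* − u i) > 0. Then the softmax probability of the maximal action satisfies π_τ(i*) ≥ 1 / (1 + (n − 1) · exp(−Δ/τ)). -/
/-- **Softmax concentration and action-probability gap** (paper's Lemma A.4,
quantitative bound).  For utilities `u : Fin n → ℝ` with unique maximizer `i*`,
utility gap `Δ = min_{i ≠ i*} (u i* - u i) > 0` and temperature `τ > 0`, the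
softmax probability of the maximal action satisfies
`π_τ(i*) ≥ 1 / (1 + (n - 1) exp (-Δ/τ))`. -/
theorem softmax_max_action_lower_bound
    (n : ℕ) (hn : 2 ≤ n) (u : Fin n → ℝ) (τ : ℝ) (hτ : 0 < τ)
    (istar : Fin n) (hmax : ∀ i, i ≠ istar → u i < u istar)
    (hne : (Finset.univ.erase istar).Nonempty)
    (Δ : ℝ)
    (hΔdef : Δ = (Finset.univ.erase istar).inf' hne (fun i => u istar - u i))
    (hΔpos : 0 < Δ) :
    1 / (1 + ((n : ℝ) - 1) * Real.exp (-Δ / τ)) ≤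
      Real.exp (u istar / τ) / (∑ j, Real.exp (u j / τ)) := by
  set E := Real.exp (u istar / τ) with hE
  set S := ∑ j, Real.exp (u j / τ) with hS
  have hEpos : 0 < E := Real.exp_pos _
  have hSpos : 0 < S := Finset.sum_pos (fun j _ => Real.exp_pos _) ⟨istar, Finset.mem_univ _⟩
  have hcard : ((Finset.univ.erase istar).card : ℝ) = (n : ℝ) - 1 := by
    rw [Finset.card_erase_of_mem (Finset.mem_univ _), Finset.card_univ, Fintype.card_fin]
    have : 1 ≤ n := by omega
    push_cast [Nat.cast_sub this]
    ring
  have hbound : ∀ i ∈ Finset.univ.erase istar,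
      Real.exp (u i / τ) ≤ E * Real.exp (-Δ / τ) := by
    intro i hi
    have hΔle : Δ ≤ u istar - u i := by
      rw [hΔdef]; exact Finset.inf'_le _ hi
    rw [hE, ← Real.exp_add]
    apply Real.exp_le_exp.2
    rw [← add_div]
    gcongr
    linarith
  have hsum : S ≤ E * (1 + ((n : ℝ) - 1) * Real.exp (-Δ / τ)) := by
    have h1 : S = E + ∑ i ∈ Finset.univ.erase istar, Real.exp (u i / τ) := by
      rw [hS, ← Finset.add_sum_erase _ _ (Finset.mem_univ istar)]
    have h2 : ∑ i ∈ Finset.univ.erase istar, Real.exp (u i / τ)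
        ≤ ((n : ℝ) - 1) * (E * Real.exp (-Δ / τ)) := by
      calc ∑ i ∈ Finset.univ.erase istar, Real.exp (u i / τ)
          ≤ ∑ _i ∈ Finset.univ.erase istar, E * Real.exp (-Δ / τ) :=
            Finset.sum_le_sum hbound
        _ = ((n : ℝ) - 1) * (E * Real.exp (-Δ / τ)) := by
            rw [Finset.sum_const, nsmul_eq_mul, hcard]
    rw [h1]; nlinarith [Real.exp_pos (-Δ / τ)]
  have hden : 0 < 1 + ((n : ℝ) - 1) * Real.exp (-Δ / τ) := by
    have : (1:ℝ) ≤ (n:ℝ) := by exact_mod_cast Nat.one_le_of_lt hn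
    nlinarith [Real.exp_pos (-Δ / τ)]
  rw [div_le_div_iff₀ hden hSpos]
  nlinarith
end

section
/- Let n ≥ 2, u : Fin n → ℝ, and let i* be an index with u i < u i* for all i ≠ i*. Then the softmax probability of the maximal action converges to 1 in the low-temperature limit: the function τ ↦ π_τ(i*) tends to 1 as τ → 0 from the right (i.e. along the filter of positive reals approaching 0). -/
open Filter

/-- **Low-temperature limit of the softmax policy** (limit statement of the
paper's Lemma A.4).  For utilities `u : Fin n → ℝ` with unique maximizer `i*`,
the softmax probability of the maximal action tends to `1` as the temperature
`τ` tends to `0` from the right. -/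
theorem softmax_max_action_low_temperature_limit
    (n : ℕ) (hn : 2 ≤ n) (u : Fin n → ℝ)
    (istar : Fin n) (hmax : ∀ i, i ≠ istar → u i < u istar) :
    Tendsto
      (fun τ : ℝ => Real.exp (u istar / τ) / (∑ j, Real.exp (u j / τ)))
      (nhdsWithin 0 (Set.Ioi 0)) (nhds 1) := by
  have hterm : ∀ j : Fin n,
      Tendsto (fun τ : ℝ => Real.exp ((u j - u istar) / τ))
        (nhdsWithin 0 (Set.Ioi 0)) (nhds (if j = istar then 1 else 0)) := by
    intro j
    by_cases hj : j = istar
    · simp [hj]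
    · simp only [if_neg hj]
      have hc : u j - u istar < 0 := sub_neg.mpr (hmax j hj)
      have h1 : Tendsto (fun τ : ℝ => (u j - u istar) / τ)
          (nhdsWithin 0 (Set.Ioi 0)) atBot := by
        have hinv : Tendsto (fun τ : ℝ => τ⁻¹) (nhdsWithin 0 (Set.Ioi 0)) atTop :=
          tendsto_inv_nhdsGT_zero
        have := hinv.const_mul_atTop_of_neg hc
        simpa [div_eq_mul_inv] using this
      exact Real.tendsto_exp_atBot.comp h1
  have hsum : Tendsto (fun τ : ℝ => ∑ j, Real.exp ((u j - u istar) / τ))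
      (nhdsWithin 0 (Set.Ioi 0)) (nhds 1) := by
    have := tendsto_finset_sum (Finset.univ) (fun j _ => hterm j)
    simpa [Finset.sum_ite_eq'] using this
  have hmain : Tendsto (fun τ : ℝ => (∑ j, Real.exp ((u j - u istar) / τ))⁻¹)
      (nhdsWithin 0 (Set.Ioi 0)) (nhds 1) := by
    simpa using hsum.inv₀ one_ne_zero
  refine hmain.congr' ?_ |>.mono_left le_rfl
  filter_upwards [self_mem_nhdsWithin] with τ (hτ : (0:ℝ) < τ)
  have : Nonempty (Fin n) := ⟨⟨0, by omega⟩⟩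
  have hpos : 0 < ∑ j, Real.exp (u j / τ) :=
    Finset.sum_pos (fun j _ => Real.exp_pos _) Finset.univ_nonempty
  have key : (∑ j, Real.exp ((u j - u istar) / τ)) =
      (∑ j, Real.exp (u j / τ)) / Real.exp (u istar / τ) := by
    rw [Finset.sum_div]
    refine Finset.sum_congr rfl fun j _ => ?_
    rw [← Real.exp_sub, sub_div]
  rw [key, inv_div]
end
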